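/- Let n ≥ 1 and let A₁, A₂ : ℕ × ℕ → M_n(ℝ), a₁, a₂ : ℕ × ℕ → ℝ with a₁, a₂ ≥ 0, and Q₁, Q₂ : ℕ × ℕ → M_n(ℝ) with each Q_ι(l,k) positive semidefinite. Let ǎ₁, ǎ₂ > 0. For a function M : ℕ × ℕ → M_n(ℝ) and ι ∈ {1,2}, define Φ_ι(M)(l,k) = (1 + ǎ₂) a_ι(l,k)² tr(M(l,k)) I + (1 + ǎ₂⁻¹) A_ι(l,k) M(l,k) A_ι(l,k)ᵀ. Suppose X, X̄ : ℕ × ℕ → M_n(ℝ) take positive semidefinite values and satisfy, for all l ≥ 1 and k ≥ 1: X(l,k) ⪯ (1 + ǎ₁) Φ₁(X)(l,k−1) + (1 + ǎ₁⁻¹) Φ₂(X)(l−1,k) + Q₁(l,k−1) + Q₂(l−1,k), and X̄(l,k) = (1 + ǎ₁) Φ₁(X̄)(l,k−1) + (1 + ǎ₁⁻¹) Φ₂(X̄)(l−1,k) + Q₁(l,k−1) + Q₂(l−1,k), with equal boundary values X̄(l,0) = X(l,0) and X̄(0,k) = X(0,k) for all l, k. Then X(l,k) ⪯ X̄(l,k)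 for all (l,k) ∈ ℕ × ℕ. -/

import Mathlib

open Matrix

/-- The one-step map `Φ_ι(M)(l,k) = (1 + ca₂) a_ι(l,k)² tr(M(l,k)) I
+ (1 + ca₂⁻¹) A_ι(l,k) M(l,k) A_ι(l,k)ᵀ` appearing in the recursive bound on the
second-order moment of the state of the 2-D system. -/
noncomputable def secondMomentMap {n : ℕ} (ca₂ : ℝ)
    (A : ℕ × ℕ → Matrix (Fin n) (Fin n) ℝ) (a : ℕ × ℕ → ℝ)
    (M : ℕ × ℕ → Matrix (Fin n) (Fin n) ℝ) (p : ℕ × ℕ) :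
    Matrix (Fin n) (Fin n) ℝ :=
  ((1 + ca₂) * (a p) ^ 2 * (M p).trace) • (1 : Matrix (Fin n) (Fin n) ℝ)
    + (1 + ca₂⁻¹) • (A p * M p * (A p)ᵀ)


/-- Comparison principle for the recursive Loewner bound on the second-order moment
of the state of the 2-D system: if `X` satisfies the recursive Loewner inequality
and `X̄` satisfies the corresponding recursive equality with the same boundary data,
then `X(l,k) ⪯ X̄(l,k)` for all `(l,k)`. -/

lemma psd_smul {n : ℕ} {M : Matrix (Fin n) (Fin n) ℝ} (hM : M.PosSemidef)
    {c : ℝ} (hc : 0 ≤ c) : (c • M).PosSemidef := by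
  refine ⟨by simp [Matrix.IsHermitian, Matrix.conjTranspose_smul,
      ← Matrix.conjTranspose_eq_transpose_of_trivial, hM.1.eq] , fun x => ?_⟩
  simpa [smul_mulVec, dotProduct_smul, Finsupp.mul_sum, mul_assoc, mul_left_comm] using mul_nonneg hc (hM.2 x)

lemma psd_trace_nonneg {n : ℕ} {M : Matrix (Fin n) (Fin n) ℝ} (hM : M.PosSemidef) :
    0 ≤ M.trace := by
  rw [Matrix.trace]
  refine Finset.sum_nonneg fun i _ => ?_
  have := hM.2 (Finsupp.single i 1)
  simpa [dotProduct, mulVec, Pi.single_apply, Finset.sum_ite_eq] using this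

lemma psd_map {n : ℕ} (ca₂ : ℝ) (hca₂ : 0 < ca₂)
    (A : ℕ × ℕ → Matrix (Fin n) (Fin n) ℝ) (a : ℕ × ℕ → ℝ)
    (M : ℕ × ℕ → Matrix (Fin n) (Fin n) ℝ) (p : ℕ × ℕ) (hM : (M p).PosSemidef) :
    (secondMomentMap ca₂ A a M p).PosSemidef := by
  refine Matrix.PosSemidef.add (psd_smul Matrix.PosSemidef.one ?_) (psd_smul ?_ ?_)
  · exact mul_nonneg (mul_nonneg (by linarith) (sq_nonneg _)) (psd_trace_nonneg hM)
  · have := hM.mul_mul_conjTranspose_same (A p)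
    simpa [Matrix.conjTranspose_eq_transpose_of_trivial] using this
  · positivity

lemma smmMap_sub {n : ℕ} (ca₂ : ℝ)
    (A : ℕ × ℕ → Matrix (Fin n) (Fin n) ℝ) (a : ℕ × ℕ → ℝ)
    (M N : ℕ × ℕ → Matrix (Fin n) (Fin n) ℝ) (p : ℕ × ℕ) :
    secondMomentMap ca₂ A a (fun q => N q - M q) p
      = secondMomentMap ca₂ A a N p - secondMomentMap ca₂ A a M p := by
  simp only [secondMomentMap, Matrix.trace_sub, Matrix.mul_sub, Matrix.sub_mul,
    mul_sub, sub_smul, smul_sub]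
  abel

/-- Comparison principle for the recursive Loewner bound on the second-order moment
of the state of the 2-D system: if `X` satisfies the recursive Loewner inequality
and `X̄` satisfies the corresponding recursive equality with the same boundary data,
then `X(l,k) ⪯ X̄(l,k)` for all `(l,k)`. -/
theorem second_moment_comparison
    {n : ℕ} (hn : 1 ≤ n)
    (A₁ A₂ : ℕ × ℕ → Matrix (Fin n) (Fin n) ℝ)
    (a₁ a₂ : ℕ × ℕ → ℝ) (ha₁ : ∀ p, 0 ≤ a₁ p) (ha₂ : ∀ p, 0 ≤ a₂ p)
    (Q₁ Q₂ : ℕ × ℕ → Matrix (Fin n) (Fin n) ℝ)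
    (hQ₁ : ∀ p, (Q₁ p).PosSemidef) (hQ₂ : ∀ p, (Q₂ p).PosSemidef)
    (ca₁ ca₂ : ℝ) (hca₁ : 0 < ca₁) (hca₂ : 0 < ca₂)
    (X Xb : ℕ × ℕ → Matrix (Fin n) (Fin n) ℝ)
    (hX : ∀ p, (X p).PosSemidef) (hXb : ∀ p, (Xb p).PosSemidef)
    (hXrec : ∀ l k : ℕ, 1 ≤ l → 1 ≤ k →
      ((1 + ca₁) • secondMomentMap ca₂ A₁ a₁ X (l, k - 1)
        + (1 + ca₁⁻¹) • secondMomentMap ca₂ A₂ a₂ X (l - 1, k)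
        + Q₁ (l, k - 1) + Q₂ (l - 1, k) - X (l, k)).PosSemidef)
    (hXbrec : ∀ l k : ℕ, 1 ≤ l → 1 ≤ k →
      Xb (l, k) = (1 + ca₁) • secondMomentMap ca₂ A₁ a₁ Xb (l, k - 1)
        + (1 + ca₁⁻¹) • secondMomentMap ca₂ A₂ a₂ Xb (l - 1, k)
        + Q₁ (l, k - 1) + Q₂ (l - 1, k))
    (hb1 : ∀ l : ℕ, Xb (l, 0) = X (l, 0)) (hb2 : ∀ k : ℕ, Xb (0, k) = X (0, k)) :
    ∀ l k : ℕ, (Xb (l, k) - X (l, k)).PosSemidef := by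
  set D : ℕ × ℕ → Matrix (Fin n) (Fin n) ℝ := fun q => Xb q - X q with hD
  have key : ∀ N l k : ℕ, l + k ≤ N → (D (l, k)).PosSemidef := by
    intro N
    induction N with
    | zero =>
      intro l k h
      obtain ⟨rfl, rfl⟩ : l = 0 ∧ k = 0 := by omega
      have h0 : Xb (0, 0) = X (0, 0) := hb1 0
      simp [hD, h0, Matrix.PosSemidef.zero]
    | succ N ih =>
      intro l k h
      rcases Nat.eq_zero_or_pos l with hl | hl
      · subst hl; simp [hD, hb2 k, Matrix.PosSemidef.zero]
      rcases Nat.eq_zero_or_pos k with hk | hk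
      · subst hk; simp [hD, hb1 l, Matrix.PosSemidef.zero]
      have h1 : (D (l, k - 1)).PosSemidef := ih l (k - 1) (by omega)
      have h2 : (D (l - 1, k)).PosSemidef := ih (l - 1) k (by omega)
      have hm1 : (secondMomentMap ca₂ A₁ a₁ D (l, k - 1)).PosSemidef :=
        psd_map ca₂ hca₂ A₁ a₁ D _ h1
      have hm2 : (secondMomentMap ca₂ A₂ a₂ D (l - 1, k)).PosSemidef :=
        psd_map ca₂ hca₂ A₂ a₂ D _ h2
      have hrec := hXrec l k hl hk
      have hEq : D (l, k) =
          (1 + ca₁) • secondMomentMap ca₂ A₁ a₁ D (l, k - 1)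
          + (1 + ca₁⁻¹) • secondMomentMap ca₂ A₂ a₂ D (l - 1, k)
          + ((1 + ca₁) • secondMomentMap ca₂ A₁ a₁ X (l, k - 1)
            + (1 + ca₁⁻¹) • secondMomentMap ca₂ A₂ a₂ X (l - 1, k)
            + Q₁ (l, k - 1) + Q₂ (l - 1, k) - X (l, k)) := by
        simp only [hD, smmMap_sub, smul_sub]
        rw [hXbrec l k hl hk]
        abel
      rw [hEq]
      have hc1 : (0:ℝ) ≤ 1 + ca₁ := by linarith
      have hc2 : (0:ℝ) ≤ 1 + ca₁⁻¹ := by positivity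
      exact ((psd_smul hm1 hc1).add (psd_smul hm2 hc2)).add hrec
  intro l k
  exact key (l + k) l k le_rfl
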